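/- Let N ≥ 1, let M be a real N×N symmetric matrix, and let λ > 0 satisfy λ·‖y‖² ≤ yᵀ M y for every y ∈ ℝ^N. Let α, β, p, q, k > 0, ζ ≥ 0, let κ₁, …, κ_N and κ be reals with κᵢ ≥ κ > 0 for all i, and let u₀ ∈ ℝ with |u₀| ≤ κ·ζ. For v ∈ ℝ^N with v ≠ 0, set e := M ⬝ v ∈ ℝ^N and V := (1/N)·√(λ · vᵀ M v). Then (√λ / (N·√(vᵀ M v))) · Σᵢ eᵢ · ( −κᵢ·((α·|eᵢ|^p + β·|eᵢ|^q)^k + ζ)·sign(eᵢ) − u₀ ) ≤ −(κ·λ/N) · (α·V^p + β·V^q)^k. -/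

import Mathlib

open Matrix Real

lemma my_sign_mul (x : ℝ) : x * Real.sign x = |x| := by
  rcases lt_trichotomy x 0 with h | h | h
  · rw [Real.sign_of_neg h, abs_of_neg h]; ring
  · simp [h]
  · rw [Real.sign_of_pos h, abs_of_pos h]; ring

lemma my_rpow_add_le {x y c : ℝ} (hx : 0 ≤ x) (hy : 0 ≤ y) (hc : 0 ≤ c) (hc1 : c ≤ 1) :
    (x + y) ^ c ≤ x ^ c + y ^ c := by
  have h := NNReal.rpow_add_le_add_rpow x.toNNReal y.toNNReal hc hc1
  rw [← NNReal.coe_le_coe] at h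
  simpa [NNReal.coe_rpow, Real.coe_toNNReal x hx, Real.coe_toNNReal y hy,
    Real.toNNReal_add hx hy] using h

lemma my_rpow_sum_le {ι : Type*} (s : Finset ι) (u : ι → ℝ) (hu : ∀ i, 0 ≤ u i)
    {c : ℝ} (hc : 0 < c) (hc1 : c ≤ 1) :
    (∑ i ∈ s, u i) ^ c ≤ ∑ i ∈ s, (u i) ^ c := by
  classical
  induction s using Finset.induction with
  | empty => simp [Real.zero_rpow hc.ne']
  | insert a t hnot ih =>
    rw [Finset.sum_insert hnot, Finset.sum_insert hnot]
    calc (u a + ∑ i ∈ t, u i) ^ c ≤ (u a) ^ c + (∑ i ∈ t, u i) ^ c :=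
          my_rpow_add_le (hu a) (Finset.sum_nonneg fun i _ => hu i) hc.le hc1
      _ ≤ (u a) ^ c + ∑ i ∈ t, (u i) ^ c := by linarith [ih]

/-- If `∑ tᵢ² ≥ N²` with `tᵢ ≥ 0` and `s ≥ 1`, then `∑ tᵢ^s ≥ N`. -/
lemma my_sum_rpow_ge (N : ℕ) (hN : 1 ≤ N) (t : Fin N → ℝ) (ht : ∀ i, 0 ≤ t i)
    {s : ℝ} (hs : 1 ≤ s)
    (h2 : ((N : ℝ)) ^ (2:ℝ) ≤ ∑ i, (t i) ^ (2:ℝ)) :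
    (N : ℝ) ≤ ∑ i, (t i) ^ s := by
  have hN1 : (1:ℝ) ≤ (N:ℝ) := by exact_mod_cast hN
  have hs0 : (0:ℝ) < s := by linarith
  have hts : ∀ i, (t i) ^ s = ((t i) ^ (2:ℝ)) ^ (s/2) := by
    intro i
    rw [← Real.rpow_mul (ht i)]
    congr 1
    ring
  rcases le_or_gt s 2 with hs2 | hs2
  · have hc : (0:ℝ) < s/2 := by linarith
    have hc1 : s/2 ≤ 1 := by linarith
    calc (N:ℝ) = (N:ℝ) ^ (1:ℝ) := (Real.rpow_one _).symm
      _ ≤ (N:ℝ) ^ s := Real.rpow_le_rpow_of_exponent_le hN1 hs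
      _ = ((N:ℝ) ^ (2:ℝ)) ^ (s/2) := by
          rw [← Real.rpow_mul (by linarith : (0:ℝ) ≤ (N:ℝ))]; congr 1; ring
      _ ≤ (∑ i, (t i) ^ (2:ℝ)) ^ (s/2) :=
          Real.rpow_le_rpow (Real.rpow_nonneg (by linarith) _) h2 hc.le
      _ ≤ ∑ i, ((t i) ^ (2:ℝ)) ^ (s/2) :=
          my_rpow_sum_le _ _ (fun i => Real.rpow_nonneg (ht i) _) hc hc1
      _ = ∑ i, (t i) ^ s := by simp_rw [hts]
  · obtain ⟨i₀, hi₀⟩ : ∃ i, (N:ℝ) ≤ (t i) ^ (2:ℝ) := by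
      by_contra hcon
      push_neg at hcon
      have hne : (Finset.univ : Finset (Fin N)).Nonempty := by
        simpa [Finset.univ_nonempty_iff] using Fin.pos_iff_nonempty.mp (by omega)
      have hlt := Finset.sum_lt_sum_of_nonempty hne (fun i _ => hcon i)
      simp only [Finset.sum_const, Finset.card_univ, Fintype.card_fin, nsmul_eq_mul] at hlt
      have hN2 : (N:ℝ) ^ (2:ℝ) = (N:ℝ) * (N:ℝ) := by
        rw [show ((2:ℝ)) = ((2:ℕ):ℝ) by norm_num, Real.rpow_natCast]; ring
      rw [hN2] at h2
      exact absurd hlt (not_lt.mpr h2)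
    calc (N:ℝ) = (N:ℝ) ^ (1:ℝ) := (Real.rpow_one _).symm
      _ ≤ (N:ℝ) ^ (s/2) := Real.rpow_le_rpow_of_exponent_le hN1 (by linarith)
      _ ≤ ((t i₀) ^ (2:ℝ)) ^ (s/2) := Real.rpow_le_rpow (by linarith) hi₀ (by linarith)
      _ = (t i₀) ^ s := (hts i₀).symm
      _ ≤ ∑ i, (t i) ^ s :=
          Finset.single_le_sum (fun i _ => Real.rpow_nonneg (ht i) s) (Finset.mem_univ i₀)

/-- Scaling bound: `x g(x) ≥ V g(V) (x/V)^(1+wk)` for the effective exponent `w`. -/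
lemma my_scale {α β p q k V : ℝ} (hα : 0 < α) (hβ : 0 < β) (hp : 0 < p) (hq : 0 < q)
    (hk : 0 < k) (hV : 0 < V) (x : ℝ) (hx : 0 ≤ x) :
    V * (α * V ^ p + β * V ^ q) ^ k *
      ((x / V) ^ (1 + (p * (α * V ^ p) + q * (β * V ^ q)) / (α * V ^ p + β * V ^ q) * k)) ≤
    x * (α * x ^ p + β * x ^ q) ^ k := by
  set A := α * V ^ p with hA
  set B := β * V ^ q with hB
  have hApos : 0 < A := mul_pos hα (Real.rpow_pos_of_pos hV p)
  have hBpos : 0 < B := mul_pos hβ (Real.rpow_pos_of_pos hV q)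
  have hD : 0 < A + B := by linarith
  set w := (p * A + q * B) / (A + B) with hw
  have hwpos : 0 < w := div_pos (by nlinarith) hD
  have hs : 0 < 1 + w * k := by nlinarith
  rcases eq_or_lt_of_le hx with hx0 | hxpos
  · rw [← hx0]
    rw [zero_div, Real.zero_rpow hs.ne', mul_zero, zero_mul]
  · set t := x / V with hT
    have htpos : 0 < t := div_pos hxpos hV
    have hxt : x = V * t := by rw [hT]; field_simp
    have hgm := Real.geom_mean_le_arith_mean2_weighted
      (le_of_lt (div_pos hApos hD)) (le_of_lt (div_pos hBpos hD))
      (Real.rpow_nonneg htpos.le p) (Real.rpow_nonneg htpos.le q)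
      (by field_simp)
    have hsplit : (t ^ p) ^ (A / (A+B)) * (t ^ q) ^ (B / (A+B)) = t ^ w := by
      rw [← Real.rpow_mul htpos.le, ← Real.rpow_mul htpos.le, ← Real.rpow_add htpos]
      congr 1
      rw [hw]
      field_simp
    rw [hsplit] at hgm
    have hstep2 : (A + B) * t ^ w ≤ A * t ^ p + B * t ^ q := by
      have hmul := mul_le_mul_of_nonneg_left hgm hD.le
      calc (A+B) * t ^ w ≤ (A+B) * (A/(A+B) * t^p + B/(A+B) * t^q) := hmul
        _ = A * t ^ p + B * t ^ q := by field_simp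
    have hxq : α * x ^ p + β * x ^ q = A * t ^ p + B * t ^ q := by
      rw [hxt, Real.mul_rpow hV.le htpos.le, Real.mul_rpow hV.le htpos.le, hA, hB]
      ring
    have hstep3 : ((A+B) * t ^ w) ^ k ≤ (α * x ^ p + β * x ^ q) ^ k := by
      rw [hxq]
      exact Real.rpow_le_rpow (by positivity) hstep2 hk.le
    have hstep4 : ((A+B) * t ^ w) ^ k = (A+B) ^ k * t ^ (w * k) := by
      rw [Real.mul_rpow hD.le (Real.rpow_nonneg htpos.le w), ← Real.rpow_mul htpos.le]
    have hfin : V * (A+B) ^ k * t ^ (1 + w * k) = x * ((A+B) ^ k * t ^ (w * k)) := by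
      rw [hxt, Real.rpow_add htpos, Real.rpow_one]
      ring
    calc V * (A + B) ^ k * (t ^ (1 + w * k)) = x * ((A+B) ^ k * t ^ (w*k)) := hfin
      _ = x * ((A+B) * t ^ w) ^ k := by rw [hstep4]
      _ ≤ x * (α * x ^ p + β * x ^ q) ^ k := mul_le_mul_of_nonneg_left hstep3 hx

/-- Key Lyapunov-derivative inequality in the proof of Theorem 3: for the
candidate Lyapunov function `V = (1/N)√(λ vᵀMv)` along the disturbed observer
error dynamics,
`(√λ/(N√(vᵀMv))) Σ eᵢ(-κᵢ((α|eᵢ|^p+β|eᵢ|^q)^k + ζ) sign(eᵢ) - u₀)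
  ≤ -(κλ/N)(α V^p + β V^q)^k` where `e = M v`. -/
theorem observer_lyapunov_derivative_bound
    (N : ℕ) (hN : 1 ≤ N) (M : Matrix (Fin N) (Fin N) ℝ) (hsymm : M.IsSymm)
    (lam : ℝ) (hlam : 0 < lam)
    (hquad : ∀ y : Fin N → ℝ, lam * (y ⬝ᵥ y) ≤ y ⬝ᵥ M.mulVec y)
    (α β p q k : ℝ) (hα : 0 < α) (hβ : 0 < β)
    (hp : 0 < p) (hq : 0 < q) (hk : 0 < k)
    (ζ : ℝ) (hζ : 0 ≤ ζ)
    (κs : Fin N → ℝ) (κ : ℝ) (hκ : 0 < κ) (hκs : ∀ i, κ ≤ κs i)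
    (u₀ : ℝ) (hu₀ : |u₀| ≤ κ * ζ)
    (v : Fin N → ℝ) (hv : v ≠ 0)
    (e : Fin N → ℝ) (he : e = M.mulVec v)
    (V : ℝ) (hV : V = (1 / (N : ℝ)) * Real.sqrt (lam * (v ⬝ᵥ M.mulVec v))) :
    (Real.sqrt lam / ((N : ℝ) * Real.sqrt (v ⬝ᵥ M.mulVec v))) *
        ∑ i, e i * (-(κs i) * ((α * |e i| ^ p + β * |e i| ^ q) ^ k + ζ) *
          Real.sign (e i) - u₀) ≤
      -(κ * lam / (N : ℝ)) * (α * V ^ p + β * V ^ q) ^ k := by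
  have hNpos : (0:ℝ) < N := by exact_mod_cast Nat.lt_of_lt_of_le Nat.zero_lt_one hN
  obtain ⟨i₀, hi₀⟩ : ∃ i, v i ≠ 0 := by
    by_contra hcon; push_neg at hcon; exact hv (funext hcon)
  have hvv : 0 < v ⬝ᵥ v := by
    have : 0 < ∑ i, v i * v i :=
      Finset.sum_pos' (fun i _ => mul_self_nonneg _)
        ⟨i₀, Finset.mem_univ _, mul_self_pos.mpr hi₀⟩
    simpa [dotProduct] using this
  set S := v ⬝ᵥ M.mulVec v with hSdef
  have hS : 0 < S := lt_of_lt_of_le (mul_pos hlam hvv) (hquad v)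
  have hsqS : 0 < Real.sqrt S := Real.sqrt_pos.mpr hS
  have hVpos : 0 < V := by
    rw [hV]
    positivity
  have hSe : S = v ⬝ᵥ e := by rw [he]
  have hCS : (v ⬝ᵥ e) ^ 2 ≤ (v ⬝ᵥ v) * (e ⬝ᵥ e) := by
    have := Finset.sum_mul_sq_le_sq_mul_sq Finset.univ v e
    simpa [dotProduct, pow_two, mul_comm, mul_left_comm, mul_assoc] using this
  have hee0 : 0 ≤ e ⬝ᵥ e := by
    have : (0:ℝ) ≤ ∑ i, e i * e i := Finset.sum_nonneg fun i _ => mul_self_nonneg _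
    simpa [dotProduct] using this
  have hee : lam * S ≤ e ⬝ᵥ e := by
    have h1 : lam * (v ⬝ᵥ v) ≤ S := hquad v
    nlinarith [hCS, mul_le_mul_of_nonneg_right h1 hee0]
  have hV2 : V ^ 2 * (N:ℝ) ^ 2 = lam * S := by
    rw [hV]
    rw [mul_pow, Real.sq_sqrt (by positivity : (0:ℝ) ≤ lam * S)]
    field_simp
  -- Sum of squares of t i = |e i| / V dominates N²
  have hedot : e ⬝ᵥ e = ∑ i, e i * e i := rfl
  have h2 : (N:ℝ) ^ (2:ℝ) ≤ ∑ i, (|e i| / V) ^ (2:ℝ) := by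
    have hrw : ∀ i : Fin N, (|e i| / V) ^ (2:ℝ) = (e i * e i) / V ^ 2 := by
      intro i
      rw [show ((2:ℝ)) = ((2:ℕ):ℝ) by norm_num, Real.rpow_natCast, div_pow, sq_abs]
      ring_nf
    rw [show ((N:ℝ)) ^ (2:ℝ) = (N:ℝ) ^ (2:ℕ) by
      rw [show ((2:ℝ)) = ((2:ℕ):ℝ) by norm_num, Real.rpow_natCast]]
    simp_rw [hrw, ← Finset.sum_div]
    rw [le_div_iff₀ (by positivity)]
    calc (N:ℝ) ^ 2 * V ^ 2 = lam * S := by rw [← hV2]; ring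
      _ ≤ e ⬝ᵥ e := hee
      _ = ∑ i, e i * e i := hedot
  -- effective exponent
  set w := (p * (α * V ^ p) + q * (β * V ^ q)) / (α * V ^ p + β * V ^ q) with hw
  have hwpos : 0 < w := by
    apply div_pos
    · have := Real.rpow_pos_of_pos hVpos p
      have := Real.rpow_pos_of_pos hVpos q
      positivity
    · have := Real.rpow_pos_of_pos hVpos p
      have := Real.rpow_pos_of_pos hVpos q
      positivity
  have hs1 : 1 ≤ 1 + w * k := by nlinarith
  have hsumt : (N:ℝ) ≤ ∑ i, (|e i| / V) ^ (1 + w * k) :=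
    my_sum_rpow_ge N hN (fun i => |e i| / V)
      (fun i => div_nonneg (abs_nonneg _) hVpos.le) hs1 h2
  set gV := (α * V ^ p + β * V ^ q) ^ k with hgV
  have hgVpos : 0 < gV := by
    rw [hgV]
    have h1 := Real.rpow_pos_of_pos hVpos p
    have h2 := Real.rpow_pos_of_pos hVpos q
    positivity
  -- key lower bound for the weighted sum
  have hkey : V * gV * (N:ℝ) ≤ ∑ i, |e i| * (α * |e i| ^ p + β * |e i| ^ q) ^ k := by
    calc V * gV * (N:ℝ) ≤ V * gV * ∑ i, (|e i| / V) ^ (1 + w * k) := by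
          apply mul_le_mul_of_nonneg_left hsumt (by positivity)
      _ = ∑ i, V * gV * ((|e i| / V) ^ (1 + w * k)) := Finset.mul_sum _ _ _
      _ ≤ ∑ i, |e i| * (α * |e i| ^ p + β * |e i| ^ q) ^ k := by
          apply Finset.sum_le_sum
          intro i _
          exact my_scale hα hβ hp hq hk hVpos (|e i|) (abs_nonneg _)
  -- per-term upper bound
  have hterm : ∀ i : Fin N,
      e i * (-(κs i) * ((α * |e i| ^ p + β * |e i| ^ q) ^ k + ζ) * Real.sign (e i) - u₀) ≤
        -(κ * (|e i| * (α * |e i| ^ p + β * |e i| ^ q) ^ k)) := by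
    intro i
    set G := (α * |e i| ^ p + β * |e i| ^ q) ^ k with hG
    have hGnn : 0 ≤ G := by rw [hG]; positivity
    have hsgn := my_sign_mul (e i)
    have h1 : -(e i * u₀) ≤ |e i| * (κ * ζ) := by
      calc -(e i * u₀) ≤ |e i * u₀| := neg_le_abs _
        _ = |e i| * |u₀| := abs_mul _ _
        _ ≤ |e i| * (κ * ζ) := mul_le_mul_of_nonneg_left hu₀ (abs_nonneg _)
    have h2' : κ * ((G + ζ) * |e i|) ≤ κs i * ((G + ζ) * |e i|) :=
      mul_le_mul_of_nonneg_right (hκs i) (mul_nonneg (by linarith) (abs_nonneg _))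
    have hexp : e i * (-(κs i) * (G + ζ) * Real.sign (e i) - u₀)
        = -((κs i) * ((G + ζ) * |e i|)) - e i * u₀ := by
      rw [← hsgn]; ring
    rw [hexp]
    have hexpand : κ * ((G + ζ) * |e i|) = κ * (|e i| * G) + (κ * ζ) * |e i| := by ring
    have hC : |e i| * (κ * ζ) = (κ * ζ) * |e i| := by ring
    linarith [h1, h2', hexpand, hC]
  -- sum the per-term bounds
  have hsum_upper :
      ∑ i, e i * (-(κs i) * ((α * |e i| ^ p + β * |e i| ^ q) ^ k + ζ) *
          Real.sign (e i) - u₀) ≤ -(κ * (V * gV * (N:ℝ))) := by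
    calc ∑ i, e i * (-(κs i) * ((α * |e i| ^ p + β * |e i| ^ q) ^ k + ζ) *
            Real.sign (e i) - u₀)
        ≤ ∑ i, -(κ * (|e i| * (α * |e i| ^ p + β * |e i| ^ q) ^ k)) :=
          Finset.sum_le_sum fun i _ => hterm i
      _ = -(κ * ∑ i, |e i| * (α * |e i| ^ p + β * |e i| ^ q) ^ k) := by
          rw [Finset.sum_neg_distrib, ← Finset.mul_sum]
      _ ≤ -(κ * (V * gV * (N:ℝ))) := by
          apply neg_le_neg
          exact mul_le_mul_of_nonneg_left hkey hκ.le
  -- conclude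
  calc (Real.sqrt lam / ((N:ℝ) * Real.sqrt S)) *
        ∑ i, e i * (-(κs i) * ((α * |e i| ^ p + β * |e i| ^ q) ^ k + ζ) *
          Real.sign (e i) - u₀)
      ≤ (Real.sqrt lam / ((N:ℝ) * Real.sqrt S)) * (-(κ * (V * gV * (N:ℝ)))) := by
        apply mul_le_mul_of_nonneg_left hsum_upper (by positivity)
    _ = -(κ * lam / (N:ℝ)) * gV := by
        have hcoef : Real.sqrt lam / ((N:ℝ) * Real.sqrt S) * (κ * (V * (N:ℝ)))
            = κ * lam / (N:ℝ) := by
          rw [hV, Real.sqrt_mul hlam.le]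
          rw [div_mul_eq_mul_div, div_eq_div_iff (by positivity) (by positivity)]
          ring_nf
          rw [Real.sq_sqrt hlam.le]
          have hN0 : (N:ℝ) ≠ 0 := ne_of_gt hNpos
          field_simp
        rw [← hcoef]
        ring
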